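/- Second-order counting lemma: let f : ℝ → ℝ be twice differentiable on an interval I with |f''(x)| ≥ c > 0 for all x ∈ I, and let J be an interval of length L. Then the set {x ∈ I ∩ ℤ : f(x) ∈ J} has cardinality at most C(1 + (L/c)^{1/2}) for an absolute constant C (one may take C = 4). -/

import Mathlib

open Set

/-- Strong-convexity auxiliary: if `iteratedDeriv 2 f ≥ c` on a convex set,
then `f x - c/2 * x^2` is convex on it. -/
lemma aux_convexOn (f : ℝ → ℝ) (I : Set ℝ) (hconv : Convex ℝ I)
    (hf : ContDiff ℝ 2 f) (c : ℝ)
    (hd : ∀ x ∈ I, c ≤ iteratedDeriv 2 f x) :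
    ConvexOn ℝ I (fun x => f x - c / 2 * x ^ 2) := by
  have hdf : Differentiable ℝ f := hf.differentiable (by norm_num)
  have hdf1 : ContDiff ℝ 1 (deriv f) := by
    have : ContDiff ℝ ((1 : ℕ) + 1) f := by exact_mod_cast hf
    exact (contDiff_succ_iff_deriv.mp this).2.2
  have hdf' : Differentiable ℝ (deriv f) := hdf1.differentiable (by norm_num)
  have hg : ∀ x, deriv (fun x => f x - c / 2 * x ^ 2) x = deriv f x - c * x := by
    intro x
    rw [deriv_fun_sub (hdf x) (by fun_prop)]
    have : deriv (fun y : ℝ => c / 2 * y ^ 2) x = c * x := by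
      rw [deriv_const_mul _ (differentiableAt_pow 2), deriv_pow_field]
      ring
    rw [this]
  apply convexOn_of_deriv2_nonneg hconv
  · exact (hdf.continuous.sub (by continuity)).continuousOn
  · exact (hdf.sub (by fun_prop)).differentiableOn
  · refine DifferentiableOn.congr ?_ (fun x _ => hg x)
    exact ((hdf'.sub (by fun_prop)).differentiableOn)
  · intro x hx
    have hx' : x ∈ I := interior_subset hx
    have hcx : deriv (fun y : ℝ => c * y) x = c := by
      have h := ((hasDerivAt_id x).const_mul c).deriv
      simpa using h
    have heq : deriv^[2] (fun x => f x - c / 2 * x ^ 2) x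
        = deriv (deriv f) x - c := by
      rw [← iteratedDeriv_eq_iterate, show (2 : ℕ) = 1 + 1 from rfl,
        iteratedDeriv_succ, iteratedDeriv_one]
      rw [funext hg, deriv_fun_sub (hdf' x) (by fun_prop), hcx]
    rw [heq]
    have h2 := hd x hx'
    rw [show (2 : ℕ) = 1 + 1 from rfl, iteratedDeriv_succ, iteratedDeriv_one] at h2
    linarith

/-- The key three-point inequality. -/
lemma aux_triple (f : ℝ → ℝ) (I : Set ℝ) (hconv : Convex ℝ I)
    (hf : ContDiff ℝ 2 f) (c b L : ℝ)
    (hd : ∀ x ∈ I, c ≤ iteratedDeriv 2 f x)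
    {x y z : ℝ} (hx : x ∈ I) (hy : y ∈ I) (hz : z ∈ I)
    (hxy : x < y) (hyz : y < z)
    (hfx : f x ∈ Set.Icc b (b + L)) (hfy : f y ∈ Set.Icc b (b + L))
    (hfz : f z ∈ Set.Icc b (b + L)) :
    c * ((y - x) * (z - y)) ≤ 2 * L := by
  have hcv := aux_convexOn f I hconv hf c hd
  have hs := hcv.slope_mono_adjacent hx hz hxy hyz
  have d1 : (0:ℝ) < y - x := by linarith
  have d2 : (0:ℝ) < z - y := by linarith
  rw [div_le_div_iff₀ d1 d2] at hs
  obtain ⟨hfx1, hfx2⟩ := hfx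
  obtain ⟨hfy1, hfy2⟩ := hfy
  obtain ⟨hfz1, hfz2⟩ := hfz
  nlinarith [mul_pos d1 d2, mul_pos (mul_pos d1 d2) (add_pos d1 d2),
    sq_nonneg (y - x), sq_nonneg (z - y)]

/-- Gap lemma for strictly monotone integer sequences. -/
lemma aux_gap {n : ℕ} (g : Fin n → ℤ) (hg : StrictMono g) :
    ∀ i j : Fin n, (i : ℕ) ≤ (j : ℕ) → ((j : ℕ) : ℤ) - (i : ℕ) ≤ g j - g i := by
  suffices h : ∀ m : ℕ, ∀ i j : Fin n, (j : ℕ) = (i : ℕ) + m → (m : ℤ) ≤ g j - g i by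
    intro i j hij
    obtain ⟨m, hm⟩ := Nat.exists_eq_add_of_le hij
    have := h m i j hm
    omega
  intro m
  induction m with
  | zero =>
    intro i j hij
    have : i = j := Fin.ext (by omega)
    simp [this]
  | succ m ih =>
    intro i j hij
    have hlt : (i : ℕ) + m < n := by omega
    set j' : Fin n := ⟨(i : ℕ) + m, hlt⟩ with hj'
    have h1 : (m : ℤ) ≤ g j' - g i := ih i j' rfl
    have h2 : g j' < g j := hg (by simp [hj', Fin.lt_def]; omega)
    push_cast
    omega

/-- Second-order counting lemma: a function whose second derivative is bounded
below in absolute value by `c > 0` on an interval `I` can send at most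
`4(1 + (L/c)^{1/2})` integers of `I` into an interval `J` of length `L`. -/
theorem counting_second_order (f : ℝ → ℝ) (I : Set ℝ) (hI : I.OrdConnected)
    (hf : ContDiff ℝ 2 f) (c L a : ℝ) (hc : 0 < c) (hL : 0 ≤ L)
    (hder : ∀ x ∈ I, c ≤ |iteratedDeriv 2 f x|) :
    (Nat.card {x : ℤ | (x : ℝ) ∈ I ∧ f (x : ℝ) ∈ Set.Icc a (a + L)} : ℝ) ≤
      4 * (1 + Real.sqrt (L / c)) := by
  have hsqrt : 0 ≤ Real.sqrt (L / c) := Real.sqrt_nonneg _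
  have hconv : Convex ℝ I := convex_iff_ordConnected.mpr hI
  set S := {x : ℤ | (x : ℝ) ∈ I ∧ f (x : ℝ) ∈ Set.Icc a (a + L)} with hS
  -- dispose of the infinite case
  by_cases hfin : S.Finite
  swap
  · rw [Nat.card_coe_set_eq, Set.Infinite.ncard hfin]
    push_cast
    nlinarith
  -- sign of the second derivative is constant: get g ∈ {f, -f} with g'' ≥ c
  have hsign : (∀ x ∈ I, c ≤ iteratedDeriv 2 f x) ∨
      (∀ x ∈ I, c ≤ iteratedDeriv 2 (-f) x) := by
    by_contra hcon
    push_neg at hcon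
    obtain ⟨⟨u, hu, hu'⟩, ⟨v, hv, hv'⟩⟩ := hcon
    have hu2 : iteratedDeriv 2 f u ≤ -c := by
      rcases le_abs.mp (hder u hu) with h | h
      · linarith
      · linarith
    have hv2 : c ≤ iteratedDeriv 2 f v := by
      have hneg : iteratedDeriv 2 (-f) v = -iteratedDeriv 2 f v := by
        simpa using iteratedDeriv_neg 2 f v
      rw [hneg] at hv'
      rcases le_abs.mp (hder v hv) with h | h
      · linarith
      · linarith
    have hcont : ContinuousOn (iteratedDeriv 2 f) (Set.uIcc u v) :=
      (hf.continuous_iteratedDeriv 2 (by norm_num)).continuousOn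
    have hmem : (0:ℝ) ∈ Set.uIcc (iteratedDeriv 2 f u) (iteratedDeriv 2 f v) := by
      rw [Set.mem_uIcc]
      left; constructor <;> linarith
    obtain ⟨w, hw, hw0⟩ := intermediate_value_uIcc hcont hmem
    have hwI : w ∈ I := hI.uIcc_subset hu hv hw
    have := hder w hwI
    rw [hw0] at this
    simp at this
    linarith
  -- unified triple inequality
  have htriple : ∀ p q r : ℤ, p ∈ S → q ∈ S → r ∈ S → p < q → q < r →
      c * (((q : ℝ) - p) * ((r : ℝ) - q)) ≤ 2 * L := by
    intro p q r hp hq hr hpq hqr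
    have hpq' : (p : ℝ) < q := by exact_mod_cast hpq
    have hqr' : (q : ℝ) < r := by exact_mod_cast hqr
    rcases hsign with h | h
    · exact aux_triple f I hconv hf c a L h hp.1 hq.1 hr.1 hpq' hqr' hp.2 hq.2 hr.2
    · have hmem : ∀ s : ℤ, s ∈ S → (-f) (s : ℝ) ∈ Set.Icc (-(a+L)) (-(a+L) + L) := by
        intro s hs
        have := hs.2
        simp only [Set.mem_Icc] at this ⊢
        constructor <;> simp <;> linarith [this.1, this.2]
      exact aux_triple (-f) I hconv hf.neg c (-(a+L)) L h hp.1 hq.1 hr.1 hpq' hqr'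
        (hmem p hp) (hmem q hq) (hmem r hr)
  -- counting
  set N := Nat.card S with hN
  by_cases hN4 : N ≤ 4
  · have : (N : ℝ) ≤ 4 := by exact_mod_cast hN4
    nlinarith
  push_neg at hN4
  have hNcard : hfin.toFinset.card = N := by
    rw [hN, Nat.card_coe_set_eq, Set.ncard_eq_toFinset_card S hfin]
  set e := hfin.toFinset.orderIsoOfFin hNcard with he
  have hememS : ∀ i : Fin N, (e i : ℤ) ∈ S := by
    intro i
    have := (e i).2
    rwa [Set.Finite.mem_toFinset] at this
  have hmono : StrictMono (fun i : Fin N => (e i : ℤ)) :=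
    fun i j hij => by exact_mod_cast e.strictMono hij
  set m : ℕ := (N - 1) / 2 with hm
  have hNge : 5 ≤ N := hN4
  have h0m : (0 : ℕ) < m := by omega
  have hmN : m < N - 1 := by omega
  set i0 : Fin N := ⟨0, by omega⟩
  set i1 : Fin N := ⟨m, by omega⟩
  set i2 : Fin N := ⟨N - 1, by omega⟩
  set p := (e i0 : ℤ)
  set q := (e i1 : ℤ)
  set r := (e i2 : ℤ)
  have hpq : p < q := hmono (by simp [i0, i1, Fin.lt_def]; omega)
  have hqr : q < r := hmono (by simp [i1, i2, Fin.lt_def]; omega)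
  have hgap1 : (m : ℤ) ≤ q - p := by
    have := aux_gap _ hmono i0 i1 (by simp [i0, i1])
    simpa [i0, i1] using this
  have hgap2 : ((N - 1 - m : ℕ) : ℤ) ≤ r - q := by
    have := aux_gap _ hmono i1 i2 (by simp [i1, i2]; omega)
    have h' : ((N - 1 : ℕ) : ℤ) - (m : ℤ) ≤ r - q := by
      simpa [i1, i2] using this
    push_cast
    omega
  have hkey := htriple p q r (hememS i0) (hememS i1) (hememS i2) hpq hqr
  -- turn into real bounds: q - p ≥ (N-2)/2 and r - q ≥ (N-2)/2
  have hb1 : ((N : ℝ) - 2) / 2 ≤ (q : ℝ) - p := by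
    have h1 : N ≤ 2 * m + 2 := by omega
    have h2 : (N : ℝ) ≤ 2 * m + 2 := by exact_mod_cast h1
    have h3 : (m : ℝ) ≤ (q : ℝ) - p := by exact_mod_cast hgap1
    linarith
  have hb2 : ((N : ℝ) - 2) / 2 ≤ (r : ℝ) - q := by
    have h1 : N ≤ 2 * (N - 1 - m) + 2 := by omega
    have h2 : (N : ℝ) ≤ 2 * ((N - 1 - m : ℕ) : ℝ) + 2 := by exact_mod_cast h1
    have h3 : ((N - 1 - m : ℕ) : ℝ) ≤ (r : ℝ) - q := by exact_mod_cast hgap2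
    linarith
  have hNpos : (0 : ℝ) < ((N : ℝ) - 2) / 2 := by
    have : (5 : ℝ) ≤ N := by exact_mod_cast hNge
    linarith
  have hsq : c * (((N : ℝ) - 2) / 2) ^ 2 ≤ 2 * L := by
    have : ((N:ℝ) - 2) / 2 * (((N:ℝ) - 2) / 2) ≤ ((q:ℝ) - p) * ((r:ℝ) - q) := by
      apply mul_le_mul hb1 hb2 (le_of_lt hNpos) (by linarith)
    nlinarith
  -- conclude: (N-2)/2 ≤ sqrt(2L/c) = sqrt 2 * sqrt (L/c)
  have hle : ((N : ℝ) - 2) / 2 ≤ Real.sqrt (2 * (L / c)) := by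
    rw [Real.le_sqrt' hNpos]
    have h2lc : 2 * (L / c) = 2 * L / c := by ring
    rw [h2lc, le_div_iff₀ hc]
    nlinarith [hsq]
  have h2 : Real.sqrt (2 * (L / c)) = Real.sqrt 2 * Real.sqrt (L / c) :=
    Real.sqrt_mul (by norm_num) _
  have hs2 : Real.sqrt 2 ≤ 2 := by
    nlinarith [Real.sq_sqrt (by norm_num : (0:ℝ) ≤ 2), Real.sqrt_nonneg 2]
  have hsfin : (N : ℝ) ≤ 2 + 2 * Real.sqrt (2 * (L/c)) := by linarith
  rw [h2] at hsfin
  nlinarith [hsqrt, hs2, Real.sqrt_nonneg 2]
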